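/- Let T_{abc} (a,b,c ∈ Fin 4, all indices lowered) be antisymmetric in its last two indices, and define ω̊^a{}_{bc} := ½( T_{bc}{}^a + T_{cb}{}^a − T^a{}_{bc} ), indices raised and lowered with η. Then for all indices a, b: 4·Σ_{c,d} Σ^{cdb} T_{cd a} − δ^b_a · (Σ^{efg}T_{efg}) = 2( 2 ω̊^c{}_{[a d]} ω̊^b{}_c{}^d − 2 ω̊^b{}_{[a d]} ω̊^c{}_c{}^d − ω̊^c{}_{ca} ω̊^d{}_d{}^b + δ^b_a ω̊^c{}_{[c| f} ω̊^d{}_{|d]}{}^f ). -/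
import Mathlib


/-! Statement 4: The gravitational energy-momentum density of the TEGR,
`4 Σ^{cdb} T_{cda} − δ^b_a T`, is expressible purely in terms of the
Levi-Civita spin connection. -/

namespace Stmt4

noncomputable section

/-- Minkowski metric diag(1,-1,-1,-1) on `Fin 4` (it equals its own inverse). -/
def η : Fin 4 → Fin 4 → ℝ := fun a b => if a = b then (if a = 0 then 1 else -1) else 0

/-- Torsion trace `T_a := Σ_b η^{bb} T_{bba}`. -/
def trace (T : Fin 4 → Fin 4 → Fin 4 → ℝ) : Fin 4 → ℝ := fun a => ∑ b, η b b * T b b a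

/-- Torsion trace with raised index `T^a := Σ_d η^{ad} T_d`. -/
def traceU (T : Fin 4 → Fin 4 → Fin 4 → ℝ) : Fin 4 → ℝ := fun a => ∑ d, η a d * trace T d

/-- Fully raised torsion `T^{abc}`. -/
def TU (T : Fin 4 → Fin 4 → Fin 4 → ℝ) : Fin 4 → Fin 4 → Fin 4 → ℝ := fun a b c =>
  ∑ d, ∑ e, ∑ f, η a d * η b e * η c f * T d e f

/-- Superpotential `Σ^{abc} := ¼(T^{abc} + T^{bac} − T^{cab}) + ½(η^{ac}T^b − η^{ab}T^c)`. -/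
def Sup (T : Fin 4 → Fin 4 → Fin 4 → ℝ) : Fin 4 → Fin 4 → Fin 4 → ℝ := fun a b c =>
  (1/4) * (TU T a b c + TU T b a c - TU T c a b)
    + (1/2) * (η a c * traceU T b - η a b * traceU T c)

/-- Torsion scalar `T := Σ^{efg} T_{efg}`. -/
def torsionScalar (T : Fin 4 → Fin 4 → Fin 4 → ℝ) : ℝ :=
  ∑ e, ∑ f, ∑ g, Sup T e f g * T e f g

/-- Levi-Civita spin connection `ω̊^a{}_{bc} := ½(T_{bc}{}^a + T_{cb}{}^a − T^a{}_{bc})`. -/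
def spin (T : Fin 4 → Fin 4 → Fin 4 → ℝ) : Fin 4 → Fin 4 → Fin 4 → ℝ := fun a b c =>
  (1/2) * ((∑ d, η a d * T b c d) + (∑ d, η a d * T c b d) - (∑ d, η a d * T d b c))

/-- Spin connection with third index raised: `ω̊^a{}_b{}^d := η^{de} ω̊^a{}_{be}`. -/
def spinU3 (T : Fin 4 → Fin 4 → Fin 4 → ℝ) : Fin 4 → Fin 4 → Fin 4 → ℝ := fun a b d =>
  ∑ e, η d e * spin T a b e


def ε (a : Fin 4) : ℝ := if a = 0 then 1 else -1

lemma sum_eta (a : Fin 4) (g : Fin 4 → ℝ) : ∑ d, η a d * g d = ε a * g a := by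
  fin_cases a <;> simp [η, ε, Fin.sum_univ_four]

lemma TU_eq (T : Fin 4 → Fin 4 → Fin 4 → ℝ) (a b c : Fin 4) :
    TU T a b c = ε a * (ε b * (ε c * T a b c)) := by
  have h : ∀ d e f : Fin 4, η a d * η b e * η c f * T d e f
      = η a d * (η b e * (η c f * T d e f)) := by intros; ring
  simp only [TU, h, ← Finset.mul_sum]
  rw [sum_eta a (fun d => ∑ e, η b e * ∑ f, η c f * T d e f),
    sum_eta b (fun e => ∑ f, η c f * T a e f), sum_eta c (fun f => T a b f)]

lemma traceU_eq (T : Fin 4 → Fin 4 → Fin 4 → ℝ) (a : Fin 4) :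
    traceU T a = ε a * trace T a := sum_eta a (trace T)

lemma spin_eq (T : Fin 4 → Fin 4 → Fin 4 → ℝ) (a b c : Fin 4) :
    spin T a b c = (1/2) * (ε a * (T b c a + T c b a - T a b c)) := by
  simp only [spin, sum_eta a (fun d => T b c d), sum_eta a (fun d => T c b d),
    sum_eta a (fun d => T d b c)]
  ring

lemma spinU3_eq (T : Fin 4 → Fin 4 → Fin 4 → ℝ) (a b d : Fin 4) :
    spinU3 T a b d = ε d * spin T a b d := sum_eta d (spin T a b)

set_option maxHeartbeats 16000000 in
theorem energy_momentum_from_spin_connection (T : Fin 4 → Fin 4 → Fin 4 → ℝ)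
    (hT : ∀ a b c, T a b c = -T a c b) :
    ∀ a b : Fin 4,
      4 * (∑ c, ∑ d, Sup T c d b * T c d a)
          - (if a = b then (1 : ℝ) else 0) * torsionScalar T =
        2 * (2 * (∑ c, ∑ d, ((spin T c a d - spin T c d a) / 2) * spinU3 T b c d)
          - 2 * (∑ c, ∑ d, ((spin T b a d - spin T b d a) / 2) * spinU3 T c c d)
          - (∑ c, spin T c c a) * (∑ d, spinU3 T d d b)
          + (if a = b then (1 : ℝ) else 0) *
              ((1 / 2) * ((∑ f, (∑ c, spin T c c f) * (∑ d, spinU3 T d d f))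
                - ∑ f, ∑ c, ∑ d, spin T c d f * spinU3 T d c f))) := by
  intro a b
  have h0 : ∀ x y, T x y y = 0 := fun x y => by linarith [hT x y y]
  have h10 : ∀ x, T x 1 0 = -T x 0 1 := fun x => hT x 1 0
  have h20 : ∀ x, T x 2 0 = -T x 0 2 := fun x => hT x 2 0
  have h21 : ∀ x, T x 2 1 = -T x 1 2 := fun x => hT x 2 1
  have h30 : ∀ x, T x 3 0 = -T x 0 3 := fun x => hT x 3 0
  have h31 : ∀ x, T x 3 1 = -T x 1 3 := fun x => hT x 3 1
  have h32 : ∀ x, T x 3 2 = -T x 2 3 := fun x => hT x 3 2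
  have e2 : (⟨2, by omega⟩ : Fin 4) = 2 := rfl
  have e3 : (⟨3, by omega⟩ : Fin 4) = 3 := rfl
  fin_cases a <;> fin_cases b <;>
    simp only [Fin.zero_eta, Fin.mk_one, e2, e3] <;>
    simp only [torsionScalar, Sup, TU_eq, traceU_eq, trace, spinU3_eq, spin_eq] <;>
    simp only [Fin.sum_univ_four] <;>
    simp only [η, ε, Fin.isValue, Fin.reduceEq, reduceIte] <;>
    simp only [h0, h10, h20, h21, h30, h31, h32] <;>
    ring

end

end Stmt4
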